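/- Let M = (E,r) be a polymatroid on a finite linearly ordered set E, and let t be a nonnegative integer. For each integer base f of M, let A_f = {i ∈ E : i is internally active with respect to f} (A_f is nonempty since the minimum element of E is always internally active). Then every point of (P(M) + t∇) ∩ ℤ^E lies in the set f + conv{−t·e_i : i ∈ A_f} for exactly one integer base f of M; that is, the sets f + t·conv{−e_i : i ∈ A_f}, as f ranges over the integer bases, partition the lattice points of P(M) + t∇. -/

import Mathlib

open scoped Pointwise
open Finset

noncomputable section

/-- The standard simplex `Δ = conv{e_i : i ∈ E}` in `ℝ^E`. -/
def stdSimplexSet (α : Type*) [Fintype α] [DecidableEq α] : Set (α → ℝ) :=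
  convexHull ℝ {x : α → ℝ | ∃ i : α, x = Pi.single i (1 : ℝ)}

/-- The number of lattice points (points of `ℤ^E`) in a subset of `ℝ^E`. -/
def latticeCount {α : Type*} (P : Set (α → ℝ)) : ℕ :=
  Set.ncard {q : α → ℤ | (fun i => (q i : ℝ)) ∈ P}

/-- `Qcount P t u` is the number of lattice points of `P + uΔ + t∇`. -/
def Qcount {α : Type*} [Fintype α] [DecidableEq α] (P : Set (α → ℝ)) (t u : ℕ) : ℕ :=
  latticeCount (P + (u : ℝ) • stdSimplexSet α + (t : ℝ) • (-stdSimplexSet α))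

/-- A polymatroid on a finite ground set, given by its rank function. -/
structure PolyMatroid (α : Type*) [Fintype α] [DecidableEq α] where
  rk : Finset α → ℕ
  rk_empty : rk ∅ = 0
  rk_mono : ∀ ⦃S T : Finset α⦄, S ⊆ T → rk S ≤ rk T
  rk_submod : ∀ S T : Finset α, rk (S ∪ T) + rk (S ∩ T) ≤ rk S + rk T

variable {α : Type*} [Fintype α] [DecidableEq α]

/-- A basis of a matroid (an independent spanning set). -/
def PolyMatroid.IsBasis (M : PolyMatroid α) (B : Finset α) : Prop :=
  M.rk B = B.card ∧ M.rk B = M.rk Finset.univ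

/-- The indicator vector of a finite set. -/
def indicatorVec {α : Type*} [DecidableEq α] (B : Finset α) : α → ℝ :=
  fun i => if i ∈ B then 1 else 0

/-- The base polytope of a matroid: the convex hull of indicator vectors of bases. -/
def matroidPolytope (M : PolyMatroid α) : Set (α → ℝ) :=
  convexHull ℝ {x : α → ℝ | ∃ B : Finset α, M.IsBasis B ∧ x = indicatorVec B}

/-- The base polytope of a polymatroid, by its inequality description. -/
def PolyMatroid.polytope (M : PolyMatroid α) : Set (α → ℝ) :=
  {x | (∑ i, x i) = (M.rk Finset.univ : ℝ) ∧
    ∀ S : Finset α, (∑ i ∈ S, x i) ≤ (M.rk S : ℝ)}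

/-- `c : ℕ × ℕ → ℤ` is a `Q'`-datum for the counting function `Q` if it is finitely
supported and interpolates `Q` in the binomial basis. -/
def IsQdatumFun (Q : ℕ → ℕ → ℕ) (c : ℕ × ℕ → ℤ) : Prop :=
  (Function.support c).Finite ∧
    ∀ t u : ℕ, (Q t u : ℤ) = ∑ᶠ p : ℕ × ℕ, c p * (t.choose p.1 : ℤ) * (u.choose p.2 : ℤ)

/-- A `Q'`-datum for the lattice-point counting function of the polytope `P`. -/
def IsQdatum (P : Set (α → ℝ)) (c : ℕ × ℕ → ℤ) : Prop :=
  IsQdatumFun (Qcount P) c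

/-- The polynomial `Q'` associated to a `Q'`-datum, as a function on `ℚ × ℚ`. -/
def Qprime (c : ℕ × ℕ → ℤ) (x y : ℚ) : ℚ :=
  ∑ᶠ p : ℕ × ℕ, (c p : ℚ) * (x - 1) ^ p.1 * (y - 1) ^ p.2

/-- The polynomial `Q'` associated to a `Q'`-datum, as a polynomial in two variables. -/
def QprimePoly (c : ℕ × ℕ → ℤ) : MvPolynomial (Fin 2) ℤ :=
  ∑ᶠ p : ℕ × ℕ,
    MvPolynomial.C (c p) * (MvPolynomial.X 0 - 1) ^ p.1 * (MvPolynomial.X 1 - 1) ^ p.2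

/-- The Tutte polynomial of a matroid, as a function on `ℚ × ℚ`. -/
def TuttePoly (M : PolyMatroid α) (x y : ℚ) : ℚ :=
  ∑ S : Finset α,
    (x - 1) ^ (M.rk Finset.univ - M.rk S) * (y - 1) ^ (S.card - M.rk S)


/-- `i` is internally active with respect to the integer base `x`: no transfer is
possible from `i` to a smaller element, i.e. `x − e_i + e_v ∉ P(M)` for all `v < i`. -/
def InternallyActive {α : Type*} [Fintype α] [DecidableEq α] [LinearOrder α]
    (P : Set (α → ℝ)) (x : α → ℤ) (i : α) : Prop :=
  ∀ v : α, v < i →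
    ((fun j => (x j : ℝ)) - Pi.single i (1 : ℝ) + Pi.single v (1 : ℝ)) ∉ P


section Aux
variable {β : Type*} [Fintype β] [LinearOrder β] (M : PolyMatroid β)


/-- integer "internal activity" -/
def Act (f : β → ℤ) (i : β) : Prop :=
  ∀ v, v < i → ∃ S : Finset β, v ∈ S ∧ i ∉ S ∧ ∑ j ∈ S, f j = (M.rk S : ℤ)

def Good (q f : β → ℤ) : Prop :=
  (∀ S : Finset β, ∑ i ∈ S, f i ≤ (M.rk S : ℤ)) ∧ (∑ i, f i = (M.rk univ : ℤ)) ∧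
    (∀ i, q i ≤ f i) ∧ ∀ i, q i < f i → Act M f i

lemma tight_inter {g : β → ℤ} (hle : ∀ S : Finset β, ∑ i ∈ S, g i ≤ (M.rk S : ℤ))
    {S T : Finset β} (hS : ∑ i ∈ S, g i = (M.rk S : ℤ)) (hT : ∑ i ∈ T, g i = (M.rk T : ℤ)) :
    (∑ i ∈ S ∩ T, g i = (M.rk (S ∩ T) : ℤ)) ∧ (∑ i ∈ S ∪ T, g i = (M.rk (S ∪ T) : ℤ)) := by
  have hsum : ∑ i ∈ S ∪ T, g i + ∑ i ∈ S ∩ T, g i = ∑ i ∈ S, g i + ∑ i ∈ T, g i :=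
    Finset.sum_union_inter
  have hsub : (M.rk (S ∪ T) : ℤ) + (M.rk (S ∩ T) : ℤ) ≤ (M.rk S : ℤ) + (M.rk T : ℤ) := by
    exact_mod_cast M.rk_submod S T
  have h1 := hle (S ∪ T)
  have h2 := hle (S ∩ T)
  constructor <;> omega

lemma exists_good (t : ℕ) (q : β → ℤ) (hle : ∀ S : Finset β, ∑ i ∈ S, q i ≤ (M.rk S : ℤ))
    (hsum : ∑ i, q i = (M.rk univ : ℤ) - t) : ∃ f, Good M q f := by
  induction t generalizing q with
  | zero =>
    refine ⟨q, hle, by simpa using hsum, fun i => le_refl _, fun i hi => absurd hi (lt_irrefl _)⟩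
  | succ t ih =>
    classical
    set 𝒮 : Finset (Finset β) :=
      (univ : Finset β).powerset.filter (fun S => ∑ i ∈ S, q i = (M.rk S : ℤ)) with h𝒮
    have hmem𝒮 : ∀ S : Finset β, S ∈ 𝒮 ↔ ∑ i ∈ S, q i = (M.rk S : ℤ) := by
      intro S; simp [h𝒮]
    set U : Finset β := 𝒮.sup id with hU
    have hUtight : ∑ i ∈ U, q i = (M.rk U : ℤ) := by
      have : ∀ S ∈ 𝒮, ∑ i ∈ S, q i = (M.rk S : ℤ) := fun S hS => (hmem𝒮 S).1 hS
      have key : ∀ T : Finset β, T = 𝒮.sup id → ∑ i ∈ T, q i = (M.rk T : ℤ) := by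
        intro T hT
        rw [hT]
        refine Finset.sup_induction (p := fun T => ∑ i ∈ T, q i = (M.rk T : ℤ)) ?_ ?_ this
        · simp [M.rk_empty]
        · intro a ha b hb
          exact (tight_inter M hle ha hb).2
      exact key U hU
    have hUne : U ≠ univ := by
      intro h
      rw [h] at hUtight
      omega
    have hcne : (univ \ U).Nonempty := by
      rw [Finset.sdiff_nonempty]
      intro h
      exact hUne (le_antisymm (Finset.subset_univ _) h)
    set i : β := (univ \ U).min' hcne with hi
    have hiU : i ∉ U := (Finset.mem_sdiff.1 ((univ \ U).min'_mem hcne)).2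
    have hminU : ∀ v, v < i → v ∈ U := by
      intro v hv
      by_contra hvU
      exact absurd ((univ \ U).min'_le v (Finset.mem_sdiff.2 ⟨Finset.mem_univ _, hvU⟩)) (not_le.2 hv)
    set q' : β → ℤ := fun j => q j + if j = i then 1 else 0 with hq'
    have hq'sumS : ∀ S : Finset β, ∑ j ∈ S, q' j = ∑ j ∈ S, q j + (if i ∈ S then 1 else 0) := by
      intro S
      rw [hq', Finset.sum_add_distrib, Finset.sum_ite_eq' S i (fun _ => (1:ℤ))]
    have hsubU : ∀ S : Finset β, ∑ j ∈ S, q j = (M.rk S : ℤ) → S ⊆ U := by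
      intro S hS j hj
      have : id S ⊆ 𝒮.sup id := Finset.le_sup ((hmem𝒮 S).2 hS)
      exact this hj
    have hle' : ∀ S : Finset β, ∑ j ∈ S, q' j ≤ (M.rk S : ℤ) := by
      intro S
      rw [hq'sumS]
      by_cases hiS : i ∈ S
      · have : ∑ j ∈ S, q j ≠ (M.rk S : ℤ) := fun h => hiU (hsubU S h hiS)
        have := hle S
        simp only [hiS, if_pos]
        omega
      · simpa [hiS] using hle S
    have hsum' : ∑ j, q' j = (M.rk univ : ℤ) - t := by
      rw [hq'sumS]
      simp only [Finset.mem_univ, if_pos]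
      push_cast at hsum ⊢
      omega
    obtain ⟨f, hf1, hf2, hf3, hf4⟩ := ih q' hle' hsum'
    refine ⟨f, hf1, hf2, fun j => le_trans ?_ (hf3 j), fun j hj => ?_⟩
    · show q j ≤ q j + if j = i then 1 else 0
      split <;> omega
    · by_cases hj' : q' j < f j
      · exact hf4 j hj'
      · -- then j = i and f j = q' j
        have hji : j = i := by
          by_contra hne
          have : q' j = q j := by rw [hq']; simp [hne]
          omega
        intro v hv
        rw [hji] at hv
        obtain ⟨S, hS𝒮, hvS⟩ := Finset.mem_sup.1 (hminU v hv)
        have hStight : ∑ k ∈ S, q k = (M.rk S : ℤ) := (hmem𝒮 S).1 hS𝒮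
        have hiS : i ∉ S := fun h => hiU (hsubU S hStight h)
        have hjS : j ∉ S := by rw [hji]; exact hiS
        refine ⟨S, hvS, hjS, ?_⟩
        have h1 : ∑ k ∈ S, q' k = (M.rk S : ℤ) := by
          rw [hq'sumS]; simp [hiS, hStight]
        have h2 : ∑ k ∈ S, q' k ≤ ∑ k ∈ S, f k := Finset.sum_le_sum (fun k _ => hf3 k)
        have h3 := hf1 S
        omega

lemma good_unique_aux (q f f' : β → ℤ) (hf : Good M q f) (hf' : Good M q f') (i : β)
    (hagree : ∀ v, v < i → f v = f' v) (hlt : f' i < f i) : False := by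
  classical
  obtain ⟨hf1, hf2, hf3, hf4⟩ := hf
  obtain ⟨hf'1, hf'2, hf'3, hf'4⟩ := hf'
  set 𝒯 : Finset (Finset β) :=
    (univ : Finset β).powerset.filter (fun S => i ∈ S ∧ ∑ k ∈ S, f' k = (M.rk S : ℤ)) with h𝒯
  have hmem𝒯 : ∀ S : Finset β, S ∈ 𝒯 ↔ i ∈ S ∧ ∑ k ∈ S, f' k = (M.rk S : ℤ) := by
    intro S; simp [h𝒯]
  set T' : Finset β := 𝒯.inf id with hT'
  have hT'p : i ∈ T' ∧ ∑ k ∈ T', f' k = (M.rk T' : ℤ) := by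
    have hterms : ∀ S ∈ 𝒯, i ∈ (id S : Finset β) ∧ ∑ k ∈ (id S : Finset β), f' k = (M.rk S : ℤ) :=
      fun S hS => (hmem𝒯 S).1 hS
    have key : ∀ T : Finset β, T = 𝒯.inf id → i ∈ T ∧ ∑ k ∈ T, f' k = (M.rk T : ℤ) := by
      intro T hT
      rw [hT]
      refine Finset.inf_induction (p := fun T => i ∈ T ∧ ∑ k ∈ T, f' k = (M.rk T : ℤ)) ?_ ?_ hterms
      · exact ⟨Finset.mem_univ i, hf'2⟩
      · intro a ha b hb
        exact ⟨Finset.mem_inter.2 ⟨ha.1, hb.1⟩, (tight_inter M hf'1 ha.2 hb.2).1⟩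
    exact key T' hT'
  have hT'min : ∀ S ∈ 𝒯, T' ⊆ S := by
    intro S hS
    have : 𝒯.inf id ⊆ id S := Finset.inf_le hS
    exact this
  have hfle : ∑ k ∈ T', f k ≤ ∑ k ∈ T', f' k := by
    rw [hT'p.2]; exact hf1 T'
  have hexj : ∃ j ∈ T', f j < f' j := by
    by_contra hno
    push_neg at hno
    have : ∑ k ∈ T', f' k < ∑ k ∈ T', f k :=
      Finset.sum_lt_sum hno ⟨i, hT'p.1, hlt⟩
    omega
  obtain ⟨j, hjT', hjlt⟩ := hexj
  have hij : i < j := by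
    rcases lt_trichotomy j i with h | h | h
    · have := hagree j h; omega
    · subst h; omega
    · exact h
  have hact : Act M f' j := hf'4 j (lt_of_le_of_lt (hf3 j) hjlt)
  obtain ⟨S, hiS, hjS, htight⟩ := hact i hij
  have hST' : S ∩ T' ∈ 𝒯 := by
    rw [hmem𝒯]
    exact ⟨Finset.mem_inter.2 ⟨hiS, hT'p.1⟩, (tight_inter M hf'1 htight hT'p.2).1⟩
  have := hT'min _ hST' hjT'
  exact hjS (Finset.mem_inter.1 this).1

lemma good_unique (q f f' : β → ℤ) (hf : Good M q f) (hf' : Good M q f') : f = f' := by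
  classical
  by_contra hne
  have hD : (univ.filter (fun k => f k ≠ f' k)).Nonempty := by
    by_contra h
    rw [Finset.not_nonempty_iff_eq_empty, Finset.filter_eq_empty_iff] at h
    exact hne (funext fun k => not_not.1 (h (Finset.mem_univ k)))
  set i := (univ.filter (fun k => f k ≠ f' k)).min' hD with hi
  have hagree : ∀ v, v < i → f v = f' v := by
    intro v hv
    by_contra h
    exact absurd ((univ.filter (fun k => f k ≠ f' k)).min'_le v
      (Finset.mem_filter.2 ⟨Finset.mem_univ v, h⟩)) (not_le.2 hv)
  have hne_i : f i ≠ f' i :=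
    (Finset.mem_filter.1 ((univ.filter (fun k => f k ≠ f' k)).min'_mem hD)).2
  rcases lt_or_gt_of_ne hne_i with h | h
  · exact good_unique_aux M q f' f hf' hf i (fun v hv => (hagree v hv).symm) h
  · exact good_unique_aux M q f f' hf hf' i hagree h

lemma stdSimplexSet_subset {β : Type*} [Fintype β] [DecidableEq β] :
    stdSimplexSet β ⊆ stdSimplex ℝ β := by
  refine convexHull_min ?_ (convex_stdSimplex ℝ β)
  rintro x ⟨i, rfl⟩
  exact single_mem_stdSimplex ℝ i

lemma sum_single_ite (S : Finset β) (i : β) :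
    ∑ j ∈ S, (Pi.single i (1:ℝ)) j = if i ∈ S then 1 else 0 := by
  simp [Pi.single_apply]

lemma hq_facts (t : ℕ) (q : β → ℤ)
    (hq : (fun i => (q i : ℝ)) ∈ M.polytope + (t : ℝ) • (-stdSimplexSet β)) :
    Nonempty β ∧ (∀ S : Finset β, ∑ i ∈ S, q i ≤ (M.rk S : ℤ)) ∧
      ∑ i, q i = (M.rk univ : ℤ) - t := by
  rw [Set.mem_add] at hq
  obtain ⟨x, hx, z, hz, hxz⟩ := hq
  rw [Set.mem_smul_set] at hz
  obtain ⟨w, hw, rfl⟩ := hz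
  rw [Set.mem_neg] at hw
  have hw0 := stdSimplexSet_subset hw
  have hw0pos : ∀ i, 0 ≤ (-w) i := hw0.1
  have hw0sum : ∑ i, (-w) i = 1 := hw0.2
  have hne : Nonempty β := by
    by_contra h
    rw [not_nonempty_iff] at h
    rw [Finset.sum_of_isEmpty] at hw0sum
    norm_num at hw0sum
  refine ⟨hne, ?_, ?_⟩
  · intro S
    have h1 : ∀ i, (q i : ℝ) = x i + (t : ℝ) * w i := by
      intro i
      have := congrFun hxz i
      simpa using this.symm
    have h2 : ((∑ i ∈ S, q i : ℤ) : ℝ) = ∑ i ∈ S, x i + (t : ℝ) * ∑ i ∈ S, w i := by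
      push_cast
      rw [Finset.mul_sum, ← Finset.sum_add_distrib]
      exact Finset.sum_congr rfl fun i _ => h1 i
    have h3 : (t : ℝ) * ∑ i ∈ S, w i ≤ 0 := by
      have : ∑ i ∈ S, w i ≤ 0 := by
        have : 0 ≤ ∑ i ∈ S, (-w) i := Finset.sum_nonneg fun i _ => hw0pos i
        simpa [Finset.sum_neg_distrib] using this
      exact mul_nonpos_of_nonneg_of_nonpos (by positivity) this
    have h4 : ((∑ i ∈ S, q i : ℤ) : ℝ) ≤ (M.rk S : ℝ) := by
      rw [h2]
      have := hx.2 S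
      linarith
    exact_mod_cast h4
  · have h1 : ∀ i, (q i : ℝ) = x i + (t : ℝ) * w i := by
      intro i
      have := congrFun hxz i
      simpa using this.symm
    have h2 : ((∑ i, q i : ℤ) : ℝ) = ∑ i, x i + (t : ℝ) * ∑ i, w i := by
      push_cast
      rw [Finset.mul_sum, ← Finset.sum_add_distrib]
      exact Finset.sum_congr rfl fun i _ => h1 i
    have h3 : ∑ i, w i = -1 := by
      have : ∑ i, (-w) i = -∑ i, w i := by simp
      rw [this] at hw0sum
      linarith
    have h4 : ((∑ i, q i : ℤ) : ℝ) = (M.rk univ : ℝ) - t := by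
      rw [h2, hx.1, h3]
      ring
    exact_mod_cast h4

lemma act_iff (f : β → ℤ) (hf1 : ∀ S : Finset β, ∑ i ∈ S, f i ≤ (M.rk S : ℤ))
    (hf2 : ∑ i, f i = (M.rk univ : ℤ)) (i : β) :
    InternallyActive M.polytope f i ↔ Act M f i := by
  have hsum : ∀ (v : β), v ≠ i → ∀ S : Finset β,
      ∑ j ∈ S, (((fun j => (f j : ℝ)) - Pi.single i (1 : ℝ) + Pi.single v (1 : ℝ)) : β → ℝ) j
        = ((∑ j ∈ S, f j : ℤ) : ℝ) - (if i ∈ S then 1 else 0) + (if v ∈ S then 1 else 0) := by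
    intro v hv S
    push_cast
    rw [← sum_single_ite S i, ← sum_single_ite S v, ← Finset.sum_sub_distrib,
      ← Finset.sum_add_distrib]
    rfl
  constructor
  · intro hIA v hv
    have hvi : v ≠ i := ne_of_lt hv
    have hg := hIA v hv
    rw [PolyMatroid.polytope, Set.mem_setOf_eq, not_and_or] at hg
    rcases hg with hg | hg
    · exfalso
      apply hg
      rw [hsum v hvi univ]
      simp [hf2]
    · push_neg at hg
      obtain ⟨S, hS⟩ := hg
      rw [hsum v hvi S] at hS
      have hle := hf1 S
      by_cases hvS : v ∈ S <;> by_cases hiS : i ∈ S <;>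
        simp only [hvS, hiS, if_pos, if_neg, not_false_iff] at hS
      · simp at hS
        exfalso
        have : ((∑ j ∈ S, f j : ℤ) : ℝ) ≤ (M.rk S : ℝ) := by exact_mod_cast hle
        push_cast at this
        linarith
      · refine ⟨S, hvS, hiS, ?_⟩
        have h1 : (M.rk S : ℝ) < ((∑ j ∈ S, f j : ℤ) : ℝ) + 1 := by
          simpa using hS
        have h2 : (M.rk S : ℤ) < (∑ j ∈ S, f j) + 1 := by exact_mod_cast h1
        have := hf1 S
        omega
      · exfalso
        have h1 : (M.rk S : ℝ) < ((∑ j ∈ S, f j : ℤ) : ℝ) - 1 := by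
          simpa using hS
        have : ((∑ j ∈ S, f j : ℤ) : ℝ) ≤ (M.rk S : ℝ) := by exact_mod_cast hle
        linarith
      · exfalso
        have h1 : (M.rk S : ℝ) < ((∑ j ∈ S, f j : ℤ) : ℝ) := by simpa using hS
        have : ((∑ j ∈ S, f j : ℤ) : ℝ) ≤ (M.rk S : ℝ) := by exact_mod_cast hle
        linarith
  · intro hAct v hv
    have hvi : v ≠ i := ne_of_lt hv
    obtain ⟨S, hvS, hiS, htight⟩ := hAct v hv
    intro hmem
    have := hmem.2 S
    rw [hsum v hvi S] at this
    simp only [hvS, hiS, if_pos, if_neg, not_false_iff] at this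
    have h1 : ((∑ j ∈ S, f j : ℤ) : ℝ) = (M.rk S : ℝ) := by exact_mod_cast htight
    simp [h1] at this
    linarith


lemma conv_subset (t : ℕ) (A : Set β) :
    convexHull ℝ ((fun i : β => (fun j : β => if j = i then -(t : ℝ) else 0)) '' A) ⊆
      {x : β → ℝ | (∀ j, x j ≤ 0) ∧ (∑ j, x j = -(t : ℝ)) ∧ ∀ j, j ∉ A → x j = 0} := by
  refine convexHull_min ?_ ?_
  · rintro _ ⟨i, hiA, rfl⟩
    refine ⟨fun j => ?_, ?_, fun j hj => ?_⟩
    · show (if j = i then -(t:ℝ) else 0) ≤ 0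
      split
      · exact neg_nonpos.2 (by positivity)
      · exact le_refl 0
    · show ∑ j, (if j = i then -(t:ℝ) else 0) = -(t:ℝ)
      rw [Finset.sum_ite_eq' univ i (fun _ => -(t:ℝ))]
      simp
    · show (if j = i then -(t:ℝ) else 0) = 0
      have : j ≠ i := fun h => hj (h ▸ hiA)
      simp [this]
  · intro x hx y hy a b ha hb hab
    obtain ⟨hx1, hx2, hx3⟩ := hx
    obtain ⟨hy1, hy2, hy3⟩ := hy
    refine ⟨fun j => ?_, ?_, fun j hj => ?_⟩
    · have h1 : a * x j ≤ 0 := mul_nonpos_of_nonneg_of_nonpos ha (hx1 j)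
      have h2 : b * y j ≤ 0 := mul_nonpos_of_nonneg_of_nonpos hb (hy1 j)
      show a * x j + b * y j ≤ 0
      linarith
    · show ∑ j, (a * x j + b * y j) = -(t : ℝ)
      rw [Finset.sum_add_distrib, ← Finset.mul_sum, ← Finset.mul_sum, hx2, hy2]
      linear_combination (-(t:ℝ)) * hab
    · show a * x j + b * y j = 0
      rw [hx3 j hj, hy3 j hj]
      ring

lemma good_to_mem (t : ℕ) (q f : β → ℤ)
    (hqsum : ∑ i, q i = (M.rk univ : ℤ) - t) (hne : Nonempty β)
    (hgood : Good M q f) :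
    (fun i => (q i : ℝ)) ∈
      ({fun i => (f i : ℝ)} : Set (β → ℝ)) +
        convexHull ℝ
          ((fun i : β => (fun j : β => if j = i then -(t : ℝ) else 0)) ''
            {i : β | InternallyActive M.polytope f i}) := by
  classical
  obtain ⟨hf1, hf2, hf3, hf4⟩ := hgood
  have hA : ∀ i, q i < f i → i ∈ {i : β | InternallyActive M.polytope f i} := fun i hi =>
    (act_iff M f hf1 hf2 i).2 (hf4 i hi)
  rw [Set.mem_add]
  refine ⟨(fun i => (f i : ℝ)), rfl, (fun j => (q j : ℝ)) - (fun j => (f j : ℝ)), ?_,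
    by funext j; show (f j : ℝ) + ((q j : ℝ) - (f j : ℝ)) = (q j : ℝ); ring⟩
  have hsumfq : ∑ i, (f i - q i) = (t : ℤ) := by
    rw [Finset.sum_sub_distrib, hf2, hqsum]; ring
  rcases Nat.eq_zero_or_pos t with ht | ht
  · subst ht
    have hzero : ∀ j, f j - q j = 0 := by
      intro j
      have := (Finset.sum_eq_zero_iff_of_nonneg
        (fun i _ => sub_nonneg.2 (hf3 i))).1 (by simpa using hsumfq) j (Finset.mem_univ j)
      omega
    set i0 : β := (univ : Finset β).min' Finset.univ_nonempty with hi0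
    have hi0A : i0 ∈ {i : β | InternallyActive M.polytope f i} := by
      intro v hv
      exact absurd ((univ : Finset β).min'_le v (Finset.mem_univ v)) (not_le.2 hv)
    refine subset_convexHull ℝ _ ⟨i0, hi0A, ?_⟩
    funext j
    have := hzero j
    have hqf : (q j : ℝ) = (f j : ℝ) := by exact_mod_cast (by omega : q j = f j)
    simp [hqf]
  · set s : Finset β := univ.filter (fun i => q i < f i) with hs
    set w : β → ℝ := fun i => ((f i - q i : ℤ) : ℝ) with hw
    have hwz : ∀ i, i ∉ s → w i = 0 := by
      intro i hi
      have : ¬ q i < f i := by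
        intro h; exact hi (Finset.mem_filter.2 ⟨Finset.mem_univ i, h⟩)
      have : f i = q i := le_antisymm (not_lt.1 this) (hf3 i)
      simp [hw, this]
    have hws : ∑ i ∈ s, w i = (t : ℝ) := by
      rw [Finset.sum_subset (Finset.filter_subset _ _) (fun x _ hx => hwz x hx)]
      rw [hw]
      beta_reduce
      exact_mod_cast congrArg (fun n : ℤ => (n : ℝ)) hsumfq
    have hcm := Finset.centerMass_mem_convexHull (R := ℝ) s
      (w := w) (fun i _ => by
        show (0:ℝ) ≤ ((f i - q i : ℤ) : ℝ)
        have : 0 ≤ f i - q i := sub_nonneg.2 (hf3 i)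
        exact_mod_cast this)
      (by rw [hws]; exact_mod_cast ht)
      (z := fun i : β => (fun j : β => if j = i then -(t : ℝ) else 0))
      (s := (fun i : β => (fun j : β => if j = i then -(t : ℝ) else 0)) ''
        {i : β | InternallyActive M.polytope f i})
      (fun i hi => Set.mem_image_of_mem _ (hA i (Finset.mem_filter.1 hi).2))
    have hcmeq : s.centerMass w (fun i : β => (fun j : β => if j = i then -(t : ℝ) else 0)) =
        (fun j => (q j : ℝ)) - (fun j => (f j : ℝ)) := by
      rw [Finset.centerMass, hws]
      funext j
      have happ : (∑ i ∈ s, w i • (fun j : β => if j = i then -(t : ℝ) else 0)) j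
          = ∑ i ∈ s, (if j = i then w i * (-(t:ℝ)) else 0) := by
        rw [Finset.sum_apply]
        refine Finset.sum_congr rfl fun i _ => ?_
        show w i * (if j = i then -(t : ℝ) else 0) = _
        split <;> ring
      show (t : ℝ)⁻¹ * ((∑ i ∈ s, w i • (fun j : β => if j = i then -(t : ℝ) else 0)) j)
          = (q j : ℝ) - (f j : ℝ)
      rw [happ, Finset.sum_ite_eq s j (fun i => w i * (-(t:ℝ)))]
      have htne : (t : ℝ) ≠ 0 := by positivity
      by_cases hjs : j ∈ s
      · rw [if_pos hjs]
        rw [hw]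
        push_cast
        field_simp
        ring
      · rw [if_neg hjs]
        have h0 : w j = 0 := hwz j hjs
        have h1 : ((f j - q j : ℤ) : ℝ) = 0 := h0
        have h2 : f j - q j = 0 := by exact_mod_cast h1
        have h3 : (f j : ℝ) = (q j : ℝ) := by exact_mod_cast (by omega : f j = q j)
        rw [h3]
        ring
    rw [← hcmeq]
    exact hcm

lemma mem_to_good (t : ℕ) (q f : β → ℤ)
    (hfP : (fun i => (f i : ℝ)) ∈ M.polytope)
    (hmem : (fun i => (q i : ℝ)) ∈
      ({fun i => (f i : ℝ)} : Set (β → ℝ)) +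
        convexHull ℝ
          ((fun i : β => (fun j : β => if j = i then -(t : ℝ) else 0)) ''
            {i : β | InternallyActive M.polytope f i})) : Good M q f := by
  classical
  have hf1 : ∀ S : Finset β, ∑ i ∈ S, f i ≤ (M.rk S : ℤ) := by
    intro S
    have := hfP.2 S
    beta_reduce at this
    exact_mod_cast this
  have hf2 : ∑ i, f i = (M.rk univ : ℤ) := by
    have := hfP.1
    beta_reduce at this
    exact_mod_cast this
  rw [Set.mem_add] at hmem
  obtain ⟨x, hx, y, hy, hxy⟩ := hmem
  rw [Set.mem_singleton_iff] at hx
  subst hx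
  have hyv : ∀ j, y j = (q j : ℝ) - (f j : ℝ) := by
    intro j
    have := congrFun hxy j
    simp only [Pi.add_apply] at this
    linarith [this]
  obtain ⟨hy1, hy2, hy3⟩ := conv_subset t _ hy
  have hf3 : ∀ i, q i ≤ f i := by
    intro i
    have := hy1 i
    rw [hyv i] at this
    have h : (q i : ℝ) ≤ (f i : ℝ) := by linarith
    exact_mod_cast h
  refine ⟨hf1, hf2, hf3, fun i hi => ?_⟩
  have hiA : i ∈ {i : β | InternallyActive M.polytope f i} := by
    by_contra h
    have := hy3 i h
    rw [hyv i] at this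
    have h2 : (q i : ℝ) = (f i : ℝ) := by linarith
    have : q i = f i := by exact_mod_cast h2
    omega
  exact (act_iff M f hf1 hf2 i).1 hiA

end Aux

/-- Every lattice point of `P(M) + t∇` lies in
`f + conv{−t·e_i : i internally active w.r.t. f}` for exactly one integer base `f`:
these simplices partition the lattice points of `P(M) + t∇`. -/
theorem stmt_17 {α : Type*} [Fintype α] [LinearOrder α]
    (M : PolyMatroid α) (t : ℕ) (q : α → ℤ)
    (hq : (fun i => (q i : ℝ)) ∈ M.polytope + (t : ℝ) • (-stdSimplexSet α)) :
    ∃! f : α → ℤ,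
      (fun i => (f i : ℝ)) ∈ M.polytope ∧
      (fun i => (q i : ℝ)) ∈
        ({fun i => (f i : ℝ)} : Set (α → ℝ)) +
          convexHull ℝ
            ((fun i : α => (fun j : α => if j = i then -(t : ℝ) else 0)) ''
              {i : α | InternallyActive M.polytope f i}) := by
  obtain ⟨hne, hq1, hq2⟩ := hq_facts M t q hq
  obtain ⟨f, hgood⟩ := exists_good M t q hq1 hq2
  refine ⟨f, ⟨⟨?_, fun S => ?_⟩, good_to_mem M t q f hq2 hne hgood⟩, ?_⟩
  · beta_reduce
    exact_mod_cast hgood.2.1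
  · beta_reduce
    exact_mod_cast hgood.1 S
  · rintro g ⟨hgP, hgmem⟩
    exact good_unique M q g f (mem_to_good M t q g hgP hgmem) hgood

end
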